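/- Let $0 \le p_1 < q_1$ and $0 \le p_2 < q_2$ with $p_1 \le p_2$ and $q_1 < q_2$. Define $h(x) = \frac{x^{p_1} - x^{q_1}}{x^{p_2} - x^{q_2}}$ for $x \in (0,1)$. Then $h$ is strictly decreasing on $(0,1)$ and $h(x) \ge \frac{q_1 - p_1}{q_2 - p_2}$ for all $x \in (0,1)$. -/

import Mathlib

open Set

open Filter Topology

lemma young_aux (θ : ℝ) (hθ0 : 0 < θ) (hθ1 : θ < 1) {y : ℝ} (hy0 : 0 < y) (hy1 : y < 1) :
    y ^ θ < 1 - θ + θ * y := by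
  have hanti : StrictAntiOn (fun y : ℝ => 1 - θ + θ * y - y ^ θ) (Ioc 0 1) := by
    apply strictAntiOn_of_deriv_neg (convex_Ioc 0 1)
    · apply ContinuousOn.sub
      · fun_prop
      · intro z hz
        exact (Real.continuousAt_rpow_const z θ (Or.inl (ne_of_gt hz.1))).continuousWithinAt
    · intro z hz
      rw [interior_Ioc] at hz
      have hd : HasDerivAt (fun y : ℝ => 1 - θ + θ * y - y ^ θ)
          (θ - θ * z ^ (θ - 1)) z := by
        have h1 : HasDerivAt (fun y : ℝ => 1 - θ + θ * y) θ z := by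
          simpa using ((hasDerivAt_id z).const_mul θ).const_add (1 - θ)
        have h2 : HasDerivAt (fun y : ℝ => y ^ θ) (θ * z ^ (θ - 1)) z :=
          Real.hasDerivAt_rpow_const (Or.inl (ne_of_gt hz.1))
        exact h1.sub h2
      rw [hd.deriv]
      have : 1 < z ^ (θ - 1) := by
        rw [Real.one_lt_rpow_iff_of_pos hz.1]
        exact Or.inr ⟨hz.2, by linarith⟩
      nlinarith
  have := hanti ⟨hy0, hy1.le⟩ (by norm_num : (1:ℝ) ∈ Ioc (0:ℝ) 1) hy1
  simp only [Real.one_rpow] at this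
  nlinarith

lemma psi_pos (a b : ℝ) (ha : 0 < a) (hb : 0 < b) {x : ℝ} (hx0 : 0 < x) (hx1 : x < 1) :
    (a + b) * x ^ b < a + b * x ^ (a + b) := by
  have hab : 0 < a + b := by linarith
  have hy0 : 0 < x ^ (a + b) := Real.rpow_pos_of_pos hx0 _
  have hy1 : x ^ (a + b) < 1 := Real.rpow_lt_one hx0.le hx1 hab
  have hθ : b / (a + b) < 1 := by rw [div_lt_one hab]; linarith
  have h := young_aux (b / (a + b)) (by positivity) hθ hy0 hy1
  rw [← Real.rpow_mul hx0.le, mul_div_cancel₀ _ (ne_of_gt hab)] at h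
  calc (a+b) * x ^ b < (a+b) * (1 - b/(a+b) + b/(a+b) * x^(a+b)) :=
        mul_lt_mul_of_pos_left h hab
    _ = a + b * x ^ (a+b) := by field_simp; ring

lemma psi_nonneg (a b : ℝ) (ha : 0 ≤ a) (hb : 0 < b) {x : ℝ} (hx0 : 0 < x) (hx1 : x < 1) :
    (a + b) * x ^ b ≤ a + b * x ^ (a + b) := by
  rcases eq_or_lt_of_le ha with h | h
  · subst h; simp
  · exact (psi_pos a b h hb hx0 hx1).le

lemma rpow_sub_pos {x : ℝ} (hx0 : 0 < x) (hx1 : x < 1) {p q : ℝ} (hpq : p < q) :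
    0 < x ^ p - x ^ q :=
  sub_pos.2 (Real.rpow_lt_rpow_of_exponent_gt hx0 hx1 hpq)

lemma hasDerivAt_quot (p q : ℝ) {x : ℝ} (hx : x ≠ 0) (hD : x ^ p - x ^ q ≠ 0) (s t : ℝ) :
    HasDerivAt (fun x : ℝ => (x ^ s - x ^ t) / (x ^ p - x ^ q))
      (((s * x ^ (s-1) - t * x ^ (t-1)) * (x ^ p - x ^ q)
        - (x ^ s - x ^ t) * (p * x ^ (p-1) - q * x ^ (q-1))) / (x ^ p - x ^ q) ^ 2) x := by
  exact HasDerivAt.div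
    ((Real.hasDerivAt_rpow_const (Or.inl hx)).sub (Real.hasDerivAt_rpow_const (Or.inl hx)))
    ((Real.hasDerivAt_rpow_const (Or.inl hx)).sub (Real.hasDerivAt_rpow_const (Or.inl hx)))
    hD

lemma L1 (p q r : ℝ) (hpq : p < q) (hqr : q < r) :
    StrictAntiOn (fun x : ℝ => (x ^ p - x ^ q) / (x ^ p - x ^ r)) (Ioo 0 1) := by
  apply strictAntiOn_of_deriv_neg (convex_Ioo 0 1)
  · intro z hz
    have hD := rpow_sub_pos hz.1 hz.2 (hpq.trans hqr)
    exact ((hasDerivAt_quot p r hz.1.ne' hD.ne' p q).continuousAt).continuousWithinAt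
  · rw [interior_Ioo]
    intro z hz
    have hz0 := hz.1
    have hz1 := hz.2
    have hD := rpow_sub_pos hz0 hz1 (hpq.trans hqr)
    rw [(hasDerivAt_quot p r hz0.ne' hD.ne' p q).deriv]
    apply div_neg_of_neg_of_pos _ (by positivity)
    have key : (p * z ^ (p-1) - q * z ^ (q-1)) * (z ^ p - z ^ r)
        - (z ^ p - z ^ q) * (p * z ^ (p-1) - r * z ^ (r-1))
        = z ^ p * z ^ q / z *
          (((q-p) + (r-q)) * z ^ (r-q) - ((q-p) + (r-q) * z ^ ((q-p)+(r-q)))) := by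
      have hp := Real.rpow_pos_of_pos hz0 p
      have hq := Real.rpow_pos_of_pos hz0 q
      have hr := Real.rpow_pos_of_pos hz0 r
      rw [Real.rpow_sub hz0 p 1, Real.rpow_sub hz0 q 1, Real.rpow_sub hz0 r 1,
        Real.rpow_sub hz0 r q, show (q-p)+(r-q) = r - p by ring, Real.rpow_sub hz0 r p,
        Real.rpow_one]
      field_simp
      ring
    rw [key]
    apply mul_neg_of_pos_of_neg (by positivity)
    have := psi_pos (q-p) (r-q) (by linarith) (by linarith) hz0 hz1
    linarith

lemma L2 (p q r : ℝ) (hpq : p ≤ q) (hqr : q < r) :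
    AntitoneOn (fun x : ℝ => (x ^ p - x ^ r) / (x ^ q - x ^ r)) (Ioo 0 1) := by
  apply antitoneOn_of_deriv_nonpos (convex_Ioo 0 1)
  · intro z hz
    have hD := rpow_sub_pos hz.1 hz.2 hqr
    exact ((hasDerivAt_quot q r hz.1.ne' hD.ne' p r).continuousAt).continuousWithinAt
  · rw [interior_Ioo]
    intro z hz
    have hD := rpow_sub_pos hz.1 hz.2 hqr
    exact ((hasDerivAt_quot q r hz.1.ne' hD.ne' p r)).differentiableAt.differentiableWithinAt
  · rw [interior_Ioo]
    intro z hz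
    have hz0 := hz.1
    have hz1 := hz.2
    have hD := rpow_sub_pos hz0 hz1 hqr
    rw [(hasDerivAt_quot q r hz0.ne' hD.ne' p r).deriv]
    apply div_nonpos_of_nonpos_of_nonneg _ (by positivity)
    have key : (p * z ^ (p-1) - r * z ^ (r-1)) * (z ^ q - z ^ r)
        - (z ^ p - z ^ r) * (q * z ^ (q-1) - r * z ^ (r-1))
        = z ^ p * z ^ q / z *
          (((q-p) + (r-q)) * z ^ (r-q) - ((q-p) + (r-q) * z ^ ((q-p)+(r-q)))) := by
      have hp := Real.rpow_pos_of_pos hz0 p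
      have hq := Real.rpow_pos_of_pos hz0 q
      have hr := Real.rpow_pos_of_pos hz0 r
      rw [Real.rpow_sub hz0 p 1, Real.rpow_sub hz0 q 1, Real.rpow_sub hz0 r 1,
        Real.rpow_sub hz0 r q, show (q-p)+(r-q) = r - p by ring, Real.rpow_sub hz0 r p,
        Real.rpow_one]
      field_simp
      ring
    rw [key]
    apply mul_nonpos_of_nonneg_of_nonpos (by positivity)
    have := psi_nonneg (q-p) (r-q) (by linarith) (by linarith) hz0 hz1
    linarith

lemma slope_tendsto (p q : ℝ) (hpq : p < q) :
    Tendsto (fun x : ℝ => (x ^ p - x ^ q) / (x - 1)) (𝓝[<] 1) (𝓝 (p - q)) := by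
  have hd : HasDerivAt (fun x : ℝ => x ^ p - x ^ q)
      (p * (1:ℝ) ^ (p-1) - q * (1:ℝ) ^ (q-1)) 1 :=
    (Real.hasDerivAt_rpow_const (Or.inl one_ne_zero)).sub
      (Real.hasDerivAt_rpow_const (Or.inl one_ne_zero))
  simp only [Real.one_rpow, mul_one] at hd
  rw [hasDerivAt_iff_tendsto_slope] at hd
  have := hd.mono_left (nhdsWithin_mono 1 (fun x hx => ne_of_lt hx))
  refine this.congr (fun x => ?_)
  simp [slope_def_field, div_eq_div_iff]

theorem ratio_lemma_decreasing (p₁ q₁ p₂ q₂ : ℝ)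
    (hp₁ : 0 ≤ p₁) (hq₁ : p₁ < q₁) (hp₂ : 0 ≤ p₂) (hq₂ : p₂ < q₂)
    (h12 : p₁ ≤ p₂) (hqq : q₁ < q₂)
    (h : ℝ → ℝ) (hh : ∀ x ∈ Ioo (0:ℝ) 1, h x = (x ^ p₁ - x ^ q₁) / (x ^ p₂ - x ^ q₂)) :
    StrictAntiOn h (Ioo (0:ℝ) 1) ∧
      ∀ x ∈ Ioo (0:ℝ) 1, (q₁ - p₁) / (q₂ - p₂) ≤ h x := by
  have hpq₂ : p₁ < q₂ := hq₁.trans hqq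
  set A : ℝ → ℝ := fun x => (x ^ p₁ - x ^ q₁) / (x ^ p₁ - x ^ q₂) with hA
  set B : ℝ → ℝ := fun x => (x ^ p₁ - x ^ q₂) / (x ^ p₂ - x ^ q₂) with hB
  have hAB : ∀ x ∈ Ioo (0:ℝ) 1, h x = A x * B x := by
    intro x hx
    have hM := rpow_sub_pos hx.1 hx.2 hpq₂
    rw [hh x hx, hA, hB]
    field_simp
  have hApos : ∀ x ∈ Ioo (0:ℝ) 1, 0 < A x := fun x hx =>
    div_pos (rpow_sub_pos hx.1 hx.2 hq₁) (rpow_sub_pos hx.1 hx.2 hpq₂)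
  have hBpos : ∀ x ∈ Ioo (0:ℝ) 1, 0 < B x := fun x hx =>
    div_pos (rpow_sub_pos hx.1 hx.2 hpq₂) (rpow_sub_pos hx.1 hx.2 hq₂)
  have hAanti : StrictAntiOn A (Ioo 0 1) := L1 p₁ q₁ q₂ hq₁ hqq
  have hBanti : AntitoneOn B (Ioo 0 1) := L2 p₁ p₂ q₂ h12 hq₂
  have hanti : StrictAntiOn h (Ioo (0:ℝ) 1) := by
    intro x hx y hy hxy
    rw [hAB x hx, hAB y hy]
    calc A y * B y ≤ A y * B x :=
          mul_le_mul_of_nonneg_left (hBanti hx hy hxy.le) (hApos y hy).le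
      _ < A x * B x := mul_lt_mul_of_pos_right (hAanti hx hy hxy) (hBpos x hx)
  refine ⟨hanti, fun x hx => ?_⟩
  -- limit of h at 1⁻
  have hmem : Ioo x 1 ∈ 𝓝[<] (1:ℝ) := Ioo_mem_nhdsLT_of_mem ⟨hx.2, le_refl 1⟩
  have hsub : Ioo x 1 ⊆ Ioo (0:ℝ) 1 := fun y hy => ⟨hx.1.trans hy.1, hy.2⟩
  have hN := slope_tendsto p₁ q₁ hq₁
  have hD := slope_tendsto p₂ q₂ hq₂
  have hlim : Tendsto h (𝓝[<] (1:ℝ)) (𝓝 ((p₁ - q₁) / (p₂ - q₂))) := by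
    refine (hN.div hD (by linarith)).congr' ?_
    filter_upwards [Ioo_mem_nhdsLT_of_mem (⟨hx.2, le_refl 1⟩ : (1:ℝ) ∈ Ioc x 1)] with y hy
    have hy' := hsub hy
    have hD' := rpow_sub_pos hy'.1 hy'.2 hq₂
    have hy1 : y - 1 ≠ 0 := by have := hy.2; intro hc; linarith [sub_eq_zero.mp hc]
    rw [hh y hy']
    simp only [Pi.div_apply]
    rw [div_div_div_cancel_right₀ hy1]
  have hLeq : (p₁ - q₁) / (p₂ - q₂) = (q₁ - p₁) / (q₂ - p₂) := by
    rw [div_eq_div_iff (by linarith) (by linarith)]; ring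
  rw [← hLeq]
  refine le_of_tendsto hlim ?_
  filter_upwards [hmem] with y hy
  exact (hanti hx (hsub hy) hy.1).le
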